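/- Let X and Y be Polish metric spaces with the product metric d((x₁,y₁),(x₂,y₂)) = d_X(x₁,x₂) + d_Y(y₁,y₂) on X×Y. Then for all Borel probability measures μ₁, μ₂ on X and ν₁, ν₂ on Y with finite first moments, the Hausdorff distance (with respect to the Kantorovich metric d_K on probability measures on X×Y) between the coupling sets satisfies H_K(Π(μ₁,ν₁), Π(μ₂,ν₂)) ≤ d_K(μ₁,μ₂) + d_K(ν₁,ν₂). -/

import Mathlib

open MeasureTheory ProbabilityTheory
open scoped ENNReal

def IsCoupling {A B : Type*} [MeasurableSpace A] [MeasurableSpace B]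
    (σ : Measure (A × B)) (μ : Measure A) (ν : Measure B) : Prop :=
  σ.map Prod.fst = μ ∧ σ.map Prod.snd = ν

noncomputable def Kcost {A B : Type*} [MeasurableSpace A] [MeasurableSpace B]
    (h : A → B → ℝ) (μ : Measure A) (ν : Measure B) : ℝ≥0∞ :=
  ⨅ σ ∈ {σ : Measure (A × B) | IsCoupling σ μ ν},
    ∫⁻ p, ENNReal.ofReal (h p.1 p.2) ∂σ

section Aux

variable {A B : Type*} [MeasurableSpace A] [MeasurableSpace B]

lemma IsCoupling.isProbabilityMeasure {σ : Measure (A × B)} {μ : Measure A} {ν : Measure B}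
    [IsProbabilityMeasure μ] (h : IsCoupling σ μ ν) : IsProbabilityMeasure σ := by
  constructor
  have : (σ.map Prod.fst) Set.univ = 1 := by rw [h.1]; exact measure_univ
  rwa [Measure.map_apply measurable_fst MeasurableSet.univ, Set.preimage_univ] at this

lemma isCoupling_prod (μ : Measure A) (ν : Measure B)
    [IsProbabilityMeasure μ] [IsProbabilityMeasure ν] : IsCoupling (μ.prod ν) μ ν :=
  ⟨Measure.fst_prod, Measure.snd_prod⟩

lemma kcost_le_coupling (h : A → B → ℝ) {τ : Measure (A × B)} {μ : Measure A} {ν : Measure B}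
    (hτ : IsCoupling τ μ ν) :
    Kcost h μ ν ≤ ∫⁻ p, ENNReal.ofReal (h p.1 p.2) ∂τ :=
  iInf₂_le τ hτ

lemma isCoupling_map_swap {σ : Measure (B × A)} {μ : Measure A} {ν : Measure B}
    (hσ : IsCoupling σ ν μ) :
    IsCoupling (σ.map (MeasurableEquiv.prodComm : B × A ≃ᵐ A × B)) μ ν := by
  constructor
  · rw [Measure.map_map measurable_fst
      (MeasurableEquiv.prodComm : B × A ≃ᵐ A × B).measurable]
    exact hσ.2
  · rw [Measure.map_map measurable_snd
      (MeasurableEquiv.prodComm : B × A ≃ᵐ A × B).measurable]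
    exact hσ.1

lemma kcost_le_comm (h : A → B → ℝ) (μ : Measure A) (ν : Measure B) :
    Kcost h μ ν ≤ Kcost (fun b a => h a b) ν μ := by
  refine le_iInf₂ fun σ hσ => ?_
  refine le_trans (kcost_le_coupling h (isCoupling_map_swap hσ)) ?_
  rw [lintegral_map_equiv]
  exact le_rfl

lemma kcost_comm (h : A → B → ℝ) (μ : Measure A) (ν : Measure B) :
    Kcost h μ ν = Kcost (fun b a => h a b) ν μ :=
  le_antisymm (kcost_le_comm h μ ν) (kcost_le_comm (fun b a => h a b) ν μ)

lemma le_iInf_add_iInf {ι κ : Type*} [Nonempty ι] [Nonempty κ]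
    {f : ι → ℝ≥0∞} {g : κ → ℝ≥0∞} {t : ℝ≥0∞} (h : ∀ i j, t ≤ f i + g j) :
    t ≤ (⨅ i, f i) + ⨅ j, g j := by
  rw [ENNReal.iInf_add]
  refine le_iInf fun i => ?_
  rw [ENNReal.add_iInf]
  exact le_iInf (h i)

end Aux

section Key

variable {X Y : Type*}
    [MetricSpace X] [PolishSpace X] [MeasurableSpace X] [BorelSpace X]
    [MetricSpace Y] [PolishSpace Y] [MeasurableSpace Y] [BorelSpace Y]
    [Nonempty X] [Nonempty Y]

lemma key_lemma (μ₁ μ₂ : Measure X) (ν₁ ν₂ : Measure Y)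
    [IsProbabilityMeasure μ₁] [IsProbabilityMeasure μ₂]
    [IsProbabilityMeasure ν₁] [IsProbabilityMeasure ν₂]
    {σ₁ : Measure (X × Y)} (hσ₁ : IsCoupling σ₁ μ₁ ν₁)
    {π : Measure (X × X)} (hπ : IsCoupling π μ₁ μ₂)
    {ρ : Measure (Y × Y)} (hρ : IsCoupling ρ ν₁ ν₂) :
    (⨅ σ₂ ∈ {σ : Measure (X × Y) | IsCoupling σ μ₂ ν₂},
        Kcost (fun p q : X × Y => dist p.1 q.1 + dist p.2 q.2) σ₁ σ₂)
      ≤ (∫⁻ z, ENNReal.ofReal (dist z.1 z.2) ∂π) +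
        ∫⁻ z, ENNReal.ofReal (dist z.1 z.2) ∂ρ := by
  haveI : IsProbabilityMeasure σ₁ := hσ₁.isProbabilityMeasure
  haveI : IsProbabilityMeasure π := hπ.isProbabilityMeasure
  haveI : IsProbabilityMeasure ρ := hρ.isProbabilityMeasure
  set κ : Kernel X X := π.condKernel with hκ
  set η : Kernel Y Y := ρ.condKernel with hη
  have hπd : μ₁ ⊗ₘ κ = π := by
    have := π.disintegrate π.condKernel
    rwa [show π.fst = μ₁ from hπ.1] at this
  have hρd : ν₁ ⊗ₘ η = ρ := by
    have := ρ.disintegrate ρ.condKernel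
    rwa [show ρ.fst = ν₁ from hρ.1] at this
  set K : Kernel (X × Y) (X × Y) :=
    (κ.comap Prod.fst measurable_fst) ×ₖ (η.comap Prod.snd measurable_snd) with hK
  have hKapp : ∀ p : X × Y, K p = (κ p.1).prod (η p.2) := by
    intro p
    rw [hK, Kernel.prod_apply, Kernel.comap_apply, Kernel.comap_apply]
  set τ : Measure ((X × Y) × (X × Y)) := σ₁ ⊗ₘ K with hτ
  have hτfst : τ.map Prod.fst = σ₁ := Measure.fst_compProd σ₁ K
  set σ₂ : Measure (X × Y) := τ.map Prod.snd with hσ₂def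
  have hτc : IsCoupling τ σ₁ σ₂ := ⟨hτfst, rfl⟩
  -- marginals of σ₂
  have hσ₂fst : σ₂.map Prod.fst = μ₂ := by
    ext s hs
    rw [hσ₂def, Measure.map_apply measurable_fst hs,
      Measure.map_apply measurable_snd (measurable_fst hs),
      Measure.compProd_apply ((measurable_fst hs).preimage measurable_snd)]
    have h1 : ∀ p : X × Y, K p (Prod.mk p ⁻¹' (Prod.snd ⁻¹' (Prod.fst ⁻¹' s))) = κ p.1 s := by
      intro p
      have : (Prod.mk p ⁻¹' (Prod.snd ⁻¹' (Prod.fst ⁻¹' s))) = s ×ˢ (Set.univ : Set Y) := by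
        ext q; simp [Set.mem_prod]
      rw [this, hKapp p, Measure.prod_prod, measure_univ, mul_one]
    simp_rw [h1]
    have h2 : ∫⁻ p, κ p.1 s ∂σ₁ = ∫⁻ x, κ x s ∂μ₁ := by
      rw [← hσ₁.1, lintegral_map (κ.measurable_coe hs) measurable_fst]
    rw [h2]
    have h3 : μ₂ s = π (Prod.snd ⁻¹' s) := by
      rw [← hπ.2, Measure.map_apply measurable_snd hs]
    rw [h3, ← hπd, Measure.compProd_apply (measurable_snd hs)]
    congr 1
  have hσ₂snd : σ₂.map Prod.snd = ν₂ := by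
    ext s hs
    rw [hσ₂def, Measure.map_apply measurable_snd hs,
      Measure.map_apply measurable_snd (measurable_snd hs),
      Measure.compProd_apply ((measurable_snd hs).preimage measurable_snd)]
    have h1 : ∀ p : X × Y, K p (Prod.mk p ⁻¹' (Prod.snd ⁻¹' (Prod.snd ⁻¹' s))) = η p.2 s := by
      intro p
      have : (Prod.mk p ⁻¹' (Prod.snd ⁻¹' (Prod.snd ⁻¹' s))) = (Set.univ : Set X) ×ˢ s := by
        ext q; simp [Set.mem_prod]
      rw [this, hKapp p, Measure.prod_prod, measure_univ, one_mul]
    simp_rw [h1]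
    have h2 : ∫⁻ p, η p.2 s ∂σ₁ = ∫⁻ y, η y s ∂ν₁ := by
      rw [← hσ₁.2, lintegral_map (η.measurable_coe hs) measurable_snd]
    rw [h2]
    have h3 : ν₂ s = ρ (Prod.snd ⁻¹' s) := by
      rw [← hρ.2, Measure.map_apply measurable_snd hs]
    rw [h3, ← hρd, Measure.compProd_apply (measurable_snd hs)]
    congr 1
  -- cost of τ
  have hmX : Measurable fun q : (X × Y) × (X × Y) => ENNReal.ofReal (dist q.1.1 q.2.1) :=
    (measurable_fst.fst.dist measurable_snd.fst).ennreal_ofReal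
  have hmY : Measurable fun q : (X × Y) × (X × Y) => ENNReal.ofReal (dist q.1.2 q.2.2) :=
    (measurable_fst.snd.dist measurable_snd.snd).ennreal_ofReal
  have hcost : (∫⁻ q, ENNReal.ofReal (dist q.1.1 q.2.1 + dist q.1.2 q.2.2) ∂τ)
      = (∫⁻ z, ENNReal.ofReal (dist z.1 z.2) ∂π) +
        ∫⁻ z, ENNReal.ofReal (dist z.1 z.2) ∂ρ := by
    have hsplit : ∀ q : (X × Y) × (X × Y),
        ENNReal.ofReal (dist q.1.1 q.2.1 + dist q.1.2 q.2.2)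
          = ENNReal.ofReal (dist q.1.1 q.2.1) + ENNReal.ofReal (dist q.1.2 q.2.2) := fun q =>
      ENNReal.ofReal_add dist_nonneg dist_nonneg
    simp_rw [hsplit]
    rw [lintegral_add_left hmX]
    congr 1
    · -- X part
      rw [Measure.lintegral_compProd hmX]
      have h1 : ∀ p : X × Y, (∫⁻ q, ENNReal.ofReal (dist p.1 q.1) ∂(K p))
          = ∫⁻ x', ENNReal.ofReal (dist p.1 x') ∂(κ p.1) := by
        intro p
        rw [hKapp p, lintegral_prod _
          ((measurable_const.dist measurable_fst).ennreal_ofReal).aemeasurable]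
        simp
      simp only [h1]
      have h2 : ∫⁻ p, (∫⁻ x', ENNReal.ofReal (dist p.1 x') ∂(κ p.1)) ∂σ₁
          = ∫⁻ x, (∫⁻ x', ENNReal.ofReal (dist x x') ∂(κ x)) ∂μ₁ := by
        rw [← hσ₁.1, lintegral_map (Measurable.lintegral_kernel_prod_right'
          (κ := κ) ((measurable_fst.dist measurable_snd).ennreal_ofReal)) measurable_fst]
      rw [h2, ← Measure.lintegral_compProd
        ((measurable_fst.dist measurable_snd).ennreal_ofReal), hπd]
    · -- Y part
      rw [Measure.lintegral_compProd hmY]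
      have h1 : ∀ p : X × Y, (∫⁻ q, ENNReal.ofReal (dist p.2 q.2) ∂(K p))
          = ∫⁻ y', ENNReal.ofReal (dist p.2 y') ∂(η p.2) := by
        intro p
        rw [hKapp p, lintegral_prod _
          ((measurable_const.dist measurable_snd).ennreal_ofReal).aemeasurable]
        simp
      simp only [h1]
      have h2 : ∫⁻ p, (∫⁻ y', ENNReal.ofReal (dist p.2 y') ∂(η p.2)) ∂σ₁
          = ∫⁻ y, (∫⁻ y', ENNReal.ofReal (dist y y') ∂(η y)) ∂ν₁ := by
        rw [← hσ₁.2, lintegral_map (Measurable.lintegral_kernel_prod_right'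
          (κ := η) ((measurable_fst.dist measurable_snd).ennreal_ofReal)) measurable_snd]
      rw [h2, ← Measure.lintegral_compProd
        ((measurable_fst.dist measurable_snd).ennreal_ofReal), hρd]
  calc (⨅ σ₂ ∈ {σ : Measure (X × Y) | IsCoupling σ μ₂ ν₂},
        Kcost (fun p q : X × Y => dist p.1 q.1 + dist p.2 q.2) σ₁ σ₂)
      ≤ Kcost (fun p q : X × Y => dist p.1 q.1 + dist p.2 q.2) σ₁ σ₂ :=
        iInf₂_le σ₂ ⟨hσ₂fst, hσ₂snd⟩
    _ ≤ ∫⁻ q, ENNReal.ofReal (dist q.1.1 q.2.1 + dist q.1.2 q.2.2) ∂τ :=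
        kcost_le_coupling _ hτc
    _ = _ := hcost

lemma half_lemma (μ₁ μ₂ : Measure X) (ν₁ ν₂ : Measure Y)
    [IsProbabilityMeasure μ₁] [IsProbabilityMeasure μ₂]
    [IsProbabilityMeasure ν₁] [IsProbabilityMeasure ν₂] :
    (⨆ σ₁ ∈ {σ : Measure (X × Y) | IsCoupling σ μ₁ ν₁},
        ⨅ σ₂ ∈ {σ : Measure (X × Y) | IsCoupling σ μ₂ ν₂},
          Kcost (fun p q : X × Y => dist p.1 q.1 + dist p.2 q.2) σ₁ σ₂)
      ≤ Kcost (fun x x' : X => dist x x') μ₁ μ₂ + Kcost (fun y y' : Y => dist y y') ν₁ ν₂ := by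
  refine iSup₂_le fun σ₁ hσ₁ => ?_
  haveI : Nonempty {π : Measure (X × X) // IsCoupling π μ₁ μ₂} :=
    ⟨⟨μ₁.prod μ₂, isCoupling_prod μ₁ μ₂⟩⟩
  haveI : Nonempty {ρ : Measure (Y × Y) // IsCoupling ρ ν₁ ν₂} :=
    ⟨⟨ν₁.prod ν₂, isCoupling_prod ν₁ ν₂⟩⟩
  have e1 : Kcost (fun x x' : X => dist x x') μ₁ μ₂
      = ⨅ π : {π : Measure (X × X) // IsCoupling π μ₁ μ₂},
          ∫⁻ z, ENNReal.ofReal (dist z.1 z.2) ∂(π : Measure (X × X)) := by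
    rw [Kcost, iInf_subtype']; rfl
  have e2 : Kcost (fun y y' : Y => dist y y') ν₁ ν₂
      = ⨅ ρ : {ρ : Measure (Y × Y) // IsCoupling ρ ν₁ ν₂},
          ∫⁻ z, ENNReal.ofReal (dist z.1 z.2) ∂(ρ : Measure (Y × Y)) := by
    rw [Kcost, iInf_subtype']; rfl
  rw [e1, e2]
  exact le_iInf_add_iInf fun π ρ => key_lemma μ₁ μ₂ ν₁ ν₂ hσ₁ π.2 ρ.2

end Key

theorem stmt5 {X Y : Type*}
    [MetricSpace X] [PolishSpace X] [MeasurableSpace X] [BorelSpace X]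
    [MetricSpace Y] [PolishSpace Y] [MeasurableSpace Y] [BorelSpace Y]
    (μ₁ μ₂ : Measure X) (ν₁ ν₂ : Measure Y)
    [IsProbabilityMeasure μ₁] [IsProbabilityMeasure μ₂]
    [IsProbabilityMeasure ν₁] [IsProbabilityMeasure ν₂]
    (x₀ : X) (y₀ : Y)
    (hμ₁ : Integrable (fun x => dist x x₀) μ₁) (hμ₂ : Integrable (fun x => dist x x₀) μ₂)
    (hν₁ : Integrable (fun y => dist y y₀) ν₁) (hν₂ : Integrable (fun y => dist y y₀) ν₂) :
    -- the Kantorovich distance on X × Y associated with the sum metric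
    -- d((x₁,y₁),(x₂,y₂)) = d_X(x₁,x₂) + d_Y(y₁,y₂)
    max
      (⨆ σ₁ ∈ {σ : Measure (X × Y) | IsCoupling σ μ₁ ν₁},
        ⨅ σ₂ ∈ {σ : Measure (X × Y) | IsCoupling σ μ₂ ν₂},
          Kcost (fun p q : X × Y => dist p.1 q.1 + dist p.2 q.2) σ₁ σ₂)
      (⨆ σ₂ ∈ {σ : Measure (X × Y) | IsCoupling σ μ₂ ν₂},
        ⨅ σ₁ ∈ {σ : Measure (X × Y) | IsCoupling σ μ₁ ν₁},
          Kcost (fun p q : X × Y => dist p.1 q.1 + dist p.2 q.2) σ₁ σ₂)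
      ≤ Kcost (fun x x' : X => dist x x') μ₁ μ₂ + Kcost (fun y y' : Y => dist y y') ν₁ ν₂ := by
  haveI : Nonempty X := ⟨x₀⟩
  haveI : Nonempty Y := ⟨y₀⟩
  refine max_le (half_lemma μ₁ μ₂ ν₁ ν₂) ?_
  have hsym : ∀ (σ₁ σ₂ : Measure (X × Y)),
      Kcost (fun p q : X × Y => dist p.1 q.1 + dist p.2 q.2) σ₁ σ₂
        = Kcost (fun p q : X × Y => dist p.1 q.1 + dist p.2 q.2) σ₂ σ₁ := by
    intro σ₁ σ₂
    rw [kcost_comm]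
    congr 1
    funext q p
    rw [dist_comm q.1 p.1, dist_comm q.2 p.2]
  have hsymX : Kcost (fun x x' : X => dist x x') μ₁ μ₂
      = Kcost (fun x x' : X => dist x x') μ₂ μ₁ := by
    rw [kcost_comm]
    congr 1
    funext x x'
    rw [dist_comm]
  have hsymY : Kcost (fun y y' : Y => dist y y') ν₁ ν₂
      = Kcost (fun y y' : Y => dist y y') ν₂ ν₁ := by
    rw [kcost_comm]
    congr 1
    funext y y'
    rw [dist_comm]
  rw [hsymX, hsymY]
  have := half_lemma μ₂ μ₁ ν₂ ν₁ (X := X) (Y := Y)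
  refine le_trans ?_ this
  refine iSup₂_le fun σ₂ hσ₂ => ?_
  refine le_trans ?_ (le_iSup₂ σ₂ hσ₂)
  refine le_iInf₂ fun σ₁ hσ₁ => ?_
  rw [← hsym σ₁ σ₂]
  exact iInf₂_le σ₁ hσ₁
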